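/- Eigenvalues of L_{k̂} come in four types (real pairs, purely imaginary pairs, quadruples, and zeros): Let p ∈ ℤ²∖{0}, let k̂ ∈ ℤ² be such that k̂ + np ≠ 0 for every n ∈ ℤ, and let Γ ∈ ℂ. Call λ ∈ ℂ an eigenvalue of L_{k̂} if there exists a nonzero ω ∈ ℓ²(ℤ, ℂ) with λ ω_n = Γ A(p, k̂+(n−1)p) ω_{n−1} + Γ̄ A(−p, k̂+(n+1)p) ω_{n+1} for all n ∈ ℤ. Then the set of eigenvalues of L_{k̂} is invariant under λ ↦ −λ and under λ ↦ λ̄ (complex conjugation); consequently every eigenvalue belongs to a real pair (c, −c), a purely imaginary pair (id, −id), a quadruple (±c ± id), or is zero. -/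

import Mathlib

/-- Squared euclidean norm of a lattice point `k ∈ ℤ²`, as a real number. -/
def nsq (k : ℤ × ℤ) : ℝ := ((k.1 ^ 2 + k.2 ^ 2 : ℤ) : ℝ)

/-- The coefficient A(p,q) = (1/2)(|q|⁻² − |p|⁻²)(p₁q₂ − p₂q₁). -/
noncomputable def coeffA (p q : ℤ × ℤ) : ℝ :=
  (1 / 2) * ((nsq q)⁻¹ - (nsq p)⁻¹) * ((p.1 * q.2 - p.2 * q.1 : ℤ) : ℝ)

/-- λ is an eigenvalue of L_{k̂} if there is a nonzero ω ∈ ℓ²(ℤ,ℂ) with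
λ ωₙ = Γ A(p, k̂+(n−1)p) ω_{n−1} + Γ̄ A(−p, k̂+(n+1)p) ω_{n+1} for all n. -/
def IsEigenvalueLk (p khat : ℤ × ℤ) (Γ lam : ℂ) : Prop :=
  ∃ ω : ℤ → ℂ, Memℓp ω 2 ∧ ω ≠ 0 ∧
    ∀ n : ℤ, lam * ω n =
      Γ * (coeffA p (khat + (n - 1) • p) : ℂ) * ω (n - 1)
      + (starRingEnd ℂ) Γ * (coeffA (-p) (khat + (n + 1) • p) : ℂ) * ω (n + 1)

lemma memℓp_norm_eq {f g : ℤ → ℂ} (h : ∀ n, ‖g n‖ = ‖f n‖) (hf : Memℓp f 2) :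
    Memℓp g 2 := by
  rw [memℓp_gen_iff (by norm_num)] at hf ⊢
  simpa only [h] using hf

/-- The set of eigenvalues of L_{k̂} is invariant under λ ↦ −λ and under complex
conjugation λ ↦ λ̄; consequently eigenvalues come in real pairs, purely imaginary
pairs, quadruples, or are zero. -/
theorem eigenvalues_Lk_symmetry
    (p : ℤ × ℤ) (hp : p ≠ 0) (khat : ℤ × ℤ)
    (hk : ∀ n : ℤ, khat + n • p ≠ 0) (Γ : ℂ) :
    ∀ lam : ℂ, IsEigenvalueLk p khat Γ lam →
      IsEigenvalueLk p khat Γ (-lam)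
        ∧ IsEigenvalueLk p khat Γ ((starRingEnd ℂ) lam) := by
  intro lam ⟨ω, hmem, hne, heq⟩
  constructor
  · -- use ω' n = (-1)^n ω n
    refine ⟨fun n => (-1 : ℂ) ^ n * ω n, ?_, ?_, ?_⟩
    · refine memℓp_norm_eq (fun n => ?_) hmem
      rw [norm_mul, norm_zpow, norm_neg, norm_one, one_zpow, one_mul]
    · intro h0
      apply hne
      funext n
      have := congrFun h0 n
      simp only [Pi.zero_apply, mul_eq_zero] at this
      rcases this with h | h
      · exact absurd h (zpow_ne_zero n (by norm_num))
      · simp [h]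
    · intro n
      have h := heq n
      have hm : (-1 : ℂ) ≠ 0 := by norm_num
      beta_reduce
      rw [zpow_sub_one₀ hm, zpow_add_one₀ hm]
      linear_combination (-(-1 : ℂ) ^ n) * h
  · -- use η n = c^n * conj (ω n), with c = Γ / conj Γ (c = 1 if Γ = 0)
    set c : ℂ := if Γ = 0 then 1 else Γ / (starRingEnd ℂ) Γ with hc_def
    have hc0 : c ≠ 0 := by
      by_cases hΓ : Γ = 0
      · simp [hc_def, hΓ]
      · simp only [hc_def, if_neg hΓ]
        exact div_ne_zero hΓ (by simpa using hΓ)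
    have hcnorm : ‖c‖ = 1 := by
      by_cases hΓ : Γ = 0
      · simp [hc_def, hΓ]
      · simp only [hc_def, if_neg hΓ, norm_div, RCLike.norm_conj]
        exact div_self (by simpa using hΓ)
    have hc1 : Γ * c⁻¹ = (starRingEnd ℂ) Γ := by
      by_cases hΓ : Γ = 0
      · simp [hΓ]
      · have h2 : (starRingEnd ℂ) Γ ≠ 0 := by simpa using hΓ
        rw [hc_def, if_neg hΓ]
        field_simp [hc_def, if_neg hΓ]
    have hc2 : (starRingEnd ℂ) Γ * c = Γ := by
      by_cases hΓ : Γ = 0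
      · simp [hΓ]
      · have h2 : (starRingEnd ℂ) Γ ≠ 0 := by simpa using hΓ
        rw [hc_def, if_neg hΓ]
        field_simp [hc_def, if_neg hΓ]
    refine ⟨fun n => c ^ n * (starRingEnd ℂ) (ω n), ?_, ?_, ?_⟩
    · refine memℓp_norm_eq (fun n => ?_) hmem
      rw [norm_mul, norm_zpow, hcnorm, one_zpow, one_mul, RCLike.norm_conj]
    · intro h0
      apply hne
      funext n
      have := congrFun h0 n
      simp only [Pi.zero_apply, mul_eq_zero] at this
      rcases this with h | h
      · exact absurd h (zpow_ne_zero n hc0)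
      · simpa using h
    · intro n
      have h := congrArg (starRingEnd ℂ) (heq n)
      simp only [map_add, map_mul, Complex.conj_ofReal, RingHomCompTriple.comp_apply,
        RingHom.id_apply, Complex.conj_conj] at h
      beta_reduce
      rw [zpow_sub_one₀ hc0, zpow_add_one₀ hc0]
      linear_combination (c ^ n) * h
        - ((coeffA p (khat + (n - 1) • p) : ℂ) * (starRingEnd ℂ) (ω (n - 1)) * c ^ n) * hc1
        - ((coeffA (-p) (khat + (n + 1) • p) : ℂ) * (starRingEnd ℂ) (ω (n + 1)) * c ^ n) * hc2
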